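/- Every weakly R̂-strategyproof pairwise SCF satisfies set-monotonicity. Equivalently, every pairwise SCF that violates set-monotonicity is strongly R̂-manipulable by a single voter who only misreports indifferences. -/

import Mathlib

open scoped Classical

variable {U : Type*}

/-- A relation is complete (total). -/
def Complete (R : U → U → Prop) : Prop := ∀ a b : U, R a b ∨ R b a

/-- Strict part of a preference relation. -/
def StrictPref (R : U → U → Prop) (a b : U) : Prop := R a b ∧ ¬ R b a

/-- Indifference part of a preference relation. -/
def Indiff (R : U → U → Prop) (a b : U) : Prop := R a b ∧ R b a

/-- Kelly's weak set extension: every element of `X` is weakly preferred to every element of `Y`. -/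
def KellyR (R : U → U → Prop) (X Y : Finset U) : Prop := ∀ x ∈ X, ∀ y ∈ Y, R x y

/-- Kelly's strict set extension. -/
def KellyP (R : U → U → Prop) (X Y : Finset U) : Prop :=
  KellyR R X Y ∧ ∃ x ∈ X, ∃ y ∈ Y, StrictPref R x y

/-- A social choice function: for any number of voters, maps a preference profile and a
feasible set to a nonempty subset of it, depending only on preferences restricted to it. -/
structure SCF (U : Type*) where
  choice : ∀ n : ℕ, (Fin n → U → U → Prop) → Finset U → Finset U
  choice_subset : ∀ n R A, choice n R A ⊆ A
  choice_nonempty : ∀ n (R : Fin n → U → U → Prop) (A : Finset U),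
    A.Nonempty → (choice n R A).Nonempty
  iia : ∀ n (R R' : Fin n → U → U → Prop) (A : Finset U),
    (∀ i, ∀ a ∈ A, ∀ b ∈ A, R i a b ↔ R' i a b) → choice n R A = choice n R' A

/-- `R'` is obtained from `R` by weakly strengthening `a` against `b`:
either `R' = R`, or `R' = R ∪ {(a,b)}`, or `R' = (R \ {(b,a)}) ∪ {(a,b)}`. -/
def weaklyStrengthens (R R' : U → U → Prop) (a b : U) : Prop :=
  (∀ x y, R' x y ↔ R x y) ∨
  (∀ x y, R' x y ↔ (R x y ∨ (x = a ∧ y = b))) ∨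
  (∀ x y, R' x y ↔ ((R x y ∧ ¬(x = b ∧ y = a)) ∨ (x = a ∧ y = b)))

/-- Set-monotonicity: the choice set is invariant under weakening unchosen alternatives. -/
def SetMonotone (f : SCF U) : Prop :=
  ∀ (n : ℕ) (R R' : Fin n → U → U → Prop) (A : Finset U) (i : Fin n) (a b : U),
    (∀ j, Complete (R j)) → (∀ j, Complete (R' j)) → A.Nonempty →
    a ∈ A → b ∈ A → b ∉ f.choice n R A →
    (∀ j, j ≠ i → R' j = R j) →
    weaklyStrengthens (R i) (R' i) a b →
    f.choice n R' A = f.choice n R A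

/-- Strong monotonicity (Maskin-style). -/
def StrongMonotone (f : SCF U) : Prop :=
  ∀ (n : ℕ) (R R' : Fin n → U → U → Prop) (A : Finset U) (i : Fin n) (a b x : U),
    (∀ j, Complete (R j)) → (∀ j, Complete (R' j)) → A.Nonempty →
    a ∈ A → b ∈ A → b ≠ x → x ∈ f.choice n R A →
    (∀ j, j ≠ i → R' j = R j) →
    weaklyStrengthens (R i) (R' i) a b →
    x ∈ f.choice n R' A

/-- Monotonicity: a chosen alternative stays chosen when it is weakly strengthened. -/
def MonotoneSCF (f : SCF U) : Prop :=
  ∀ (n : ℕ) (R R' : Fin n → U → U → Prop) (A : Finset U) (i : Fin n) (a b : U),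
    (∀ j, Complete (R j)) → (∀ j, Complete (R' j)) → A.Nonempty →
    a ∈ A → b ∈ A → a ∈ f.choice n R A →
    (∀ j, j ≠ i → R' j = R j) →
    weaklyStrengthens (R i) (R' i) a b →
    a ∈ f.choice n R' A

/-- Independence of unchosen alternatives. -/
def IUA (f : SCF U) : Prop :=
  ∀ (n : ℕ) (R R' : Fin n → U → U → Prop) (A : Finset U),
    (∀ j, Complete (R j)) → (∀ j, Complete (R' j)) → A.Nonempty →
    (∀ i : Fin n, ∀ a ∈ f.choice n R A, ∀ b ∈ A,
      (R i a b ↔ R' i a b) ∧ (R i b a ↔ R' i b a)) →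
    f.choice n R' A = f.choice n R A

/-- Strong superset property: choice sets are invariant under removal of unchosen alternatives. -/
def SSP (f : SCF U) : Prop :=
  ∀ (n : ℕ) (R : Fin n → U → U → Prop) (A B : Finset U),
    (∀ j, Complete (R j)) → A.Nonempty →
    f.choice n R A ⊆ B → B ⊆ A →
    f.choice n R B = f.choice n R A

/-- Weak R̂-group-strategyproofness: no group can obtain a Kelly-weakly-preferred different
choice set by misreporting only their strict preferences. -/
def WeakKellyGroupSP (f : SCF U) : Prop :=
  ¬ ∃ (n : ℕ) (R R' : Fin n → U → U → Prop) (A : Finset U) (G : Finset (Fin n)),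
    (∀ j, Complete (R j)) ∧ (∀ j, Complete (R' j)) ∧ A.Nonempty ∧
    (∀ i, i ∉ G → R' i = R i) ∧
    (∀ i ∈ G, ∀ a b : U, Indiff (R i) a b → Indiff (R' i) a b) ∧
    f.choice n R' A ≠ f.choice n R A ∧
    (∀ i ∈ G, KellyR (R i) (f.choice n R' A) (f.choice n R A))

/-- Weak R̂-strategyproofness (single manipulator misreporting only strict preferences). -/
def WeakKellySP (f : SCF U) : Prop :=
  ¬ ∃ (n : ℕ) (R R' : Fin n → U → U → Prop) (A : Finset U) (i : Fin n),
    (∀ j, Complete (R j)) ∧ (∀ j, Complete (R' j)) ∧ A.Nonempty ∧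
    (∀ j, j ≠ i → R' j = R j) ∧
    (∀ a b : U, Indiff (R i) a b → Indiff (R' i) a b) ∧
    f.choice n R' A ≠ f.choice n R A ∧
    KellyR (R i) (f.choice n R' A) (f.choice n R A)

/-- Weak P̂-strategyproofness (single manipulator misreporting only strict preferences). -/
def WeakKellyPSP (f : SCF U) : Prop :=
  ¬ ∃ (n : ℕ) (R R' : Fin n → U → U → Prop) (A : Finset U) (i : Fin n),
    (∀ j, Complete (R j)) ∧ (∀ j, Complete (R' j)) ∧ A.Nonempty ∧
    (∀ j, j ≠ i → R' j = R j) ∧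
    (∀ a b : U, Indiff (R i) a b → Indiff (R' i) a b) ∧
    f.choice n R' A ≠ f.choice n R A ∧
    KellyP (R i) (f.choice n R' A) (f.choice n R A)

/-- Net majority margin of `a` against `b`. -/
noncomputable def margin {n : ℕ} (R : Fin n → U → U → Prop) (a b : U) : ℤ :=
  ((Finset.univ.filter fun i => StrictPref (R i) a b).card : ℤ) -
  ((Finset.univ.filter fun i => StrictPref (R i) b a).card : ℤ)

/-- A pairwise SCF: the outcome depends only on the net pairwise majority margins. -/
def PairwiseSCF (f : SCF U) : Prop :=
  ∀ (n m : ℕ) (R : Fin n → U → U → Prop) (R' : Fin m → U → U → Prop) (A : Finset U),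
    (∀ j, Complete (R j)) → (∀ j, Complete (R' j)) →
    (∀ a ∈ A, ∀ b ∈ A, margin R a b = margin R' a b) →
    f.choice n R A = f.choice m R' A

/-- Condorcet winner: beats every other feasible alternative in pairwise majority comparisons. -/
def CondorcetWinner {V : Type*} [Fintype V] (R : V → U → U → Prop) (A : Finset U)
    (c : U) : Prop :=
  c ∈ A ∧ ∀ b ∈ A, b ≠ c →
    (Finset.univ.filter fun i => R i c b).card > (Finset.univ.filter fun i => R i b c).card

/-- A Condorcet extension uniquely selects the Condorcet winner whenever one exists. -/
def CondorcetExtension (f : SCF U) : Prop :=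
  ∀ (n : ℕ) (R : Fin n → U → U → Prop) (A : Finset U) (c : U),
    (∀ j, Complete (R j)) → CondorcetWinner R A c → f.choice n R A = {c}

/-- A resolute SCF always chooses a single alternative. -/
def Resolute (f : SCF U) : Prop :=
  ∀ (n : ℕ) (R : Fin n → U → U → Prop) (A : Finset U),
    (∀ j, Complete (R j)) → A.Nonempty → (f.choice n R A).card = 1


/-! ### Auxiliary machinery for the proof -/

noncomputable def sgn (T : U → U → Prop) (x y : U) : ℤ :=
  (if StrictPref T x y then 1 else 0) - (if StrictPref T y x then 1 else 0)

noncomputable def chi (a b x y : U) : ℤ :=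
  if x = a ∧ y = b then 1 else if x = b ∧ y = a then -1 else 0

def indRel : U → U → Prop := fun _ _ => True

def prefRel (a b : U) : U → U → Prop := fun x y => ¬(x = b ∧ y = a)

lemma indRel_complete : Complete (indRel : U → U → Prop) := fun _ _ => Or.inl trivial

lemma prefRel_complete {a b : U} (hab : a ≠ b) : Complete (prefRel a b) := by
  intro x y
  by_cases h : x = b ∧ y = a
  · right; rintro ⟨h1, h2⟩; exact hab (h2.symm.trans h.1)
  · left; exact h

lemma complete_snoc {n : ℕ} {B : Fin n → U → U → Prop} {T : U → U → Prop}
    (hB : ∀ j, Complete (B j)) (hT : Complete T) :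
    ∀ j, Complete ((Fin.snoc B T : Fin (n + 1) → U → U → Prop) j) := by
  intro j
  refine Fin.lastCases ?_ ?_ j
  · simpa using hT
  · intro k; simpa using hB k

lemma margin_eq_sum {n : ℕ} (R : Fin n → U → U → Prop) (x y : U) :
    margin R x y = ∑ j, sgn (R j) x y := by
  unfold margin sgn
  rw [Finset.card_filter, Finset.card_filter]
  push_cast
  rw [← Finset.sum_sub_distrib]

lemma margin_snoc {n : ℕ} (R : Fin n → U → U → Prop) (T : U → U → Prop) (x y : U) :
    margin (Fin.snoc R T) x y = margin R x y + sgn T x y := by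
  rw [margin_eq_sum, margin_eq_sum, Fin.sum_univ_castSucc]
  simp

lemma margin_update {n : ℕ} (R R' : Fin n → U → U → Prop) (i : Fin n)
    (h : ∀ j, j ≠ i → R' j = R j) (x y : U) :
    margin R' x y = margin R x y + (sgn (R' i) x y - sgn (R i) x y) := by
  rw [margin_eq_sum, margin_eq_sum]
  have h1 : ∑ j, sgn (R' j) x y - ∑ j, sgn (R j) x y
      = ∑ j, (sgn (R' j) x y - sgn (R j) x y) := by
    rw [Finset.sum_sub_distrib]
  have h2 : ∑ j, (sgn (R' j) x y - sgn (R j) x y) = sgn (R' i) x y - sgn (R i) x y := by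
    apply Finset.sum_eq_single_of_mem i (Finset.mem_univ i)
    intro j _ hj
    rw [h j hj]; ring
  linarith [h1, h2]

lemma sgn_ind (x y : U) : sgn (indRel : U → U → Prop) x y = 0 := by
  simp [sgn, StrictPref, indRel]

lemma sgn_pref {a b : U} (hab : a ≠ b) (x y : U) : sgn (prefRel a b) x y = chi a b x y := by
  have hsp : ∀ u v : U, StrictPref (prefRel a b) u v ↔ (u = a ∧ v = b) := by
    intro u v
    unfold StrictPref prefRel
    constructor
    · rintro ⟨h1, h2⟩
      obtain ⟨rfl, rfl⟩ := not_not.mp h2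
      exact ⟨rfl, rfl⟩
    · intro hv
      exact ⟨fun hc => hab (hv.1.symm.trans hc.1), not_not_intro ⟨hv.2, hv.1⟩⟩
  unfold sgn chi
  rw [if_congr (hsp x y) rfl rfl, if_congr (hsp y x) rfl rfl]
  by_cases h1 : x = a ∧ y = b
  · have h2 : ¬(y = a ∧ x = b) := fun hc => hab (h1.1.symm.trans hc.2)
    have h3 : ¬(x = b ∧ y = a) := fun hc => hab (h1.1.symm.trans hc.1)
    simp [h1, h2, h3, hab, Ne.symm hab]
  · by_cases h2 : y = a ∧ x = b
    · have h3 : x = b ∧ y = a := ⟨h2.2, h2.1⟩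
      simp [h1, h2, h3, hab, Ne.symm hab]
    · have h3 : ¬(x = b ∧ y = a) := fun hc => h2 ⟨hc.2, hc.1⟩
      simp [h1, h2, h3, hab, Ne.symm hab]

lemma sgn_congr_sp {T T' : U → U → Prop} {x y : U}
    (e1 : StrictPref T' x y ↔ StrictPref T x y)
    (e2 : StrictPref T' y x ↔ StrictPref T y x) : sgn T' x y = sgn T x y := by
  unfold sgn
  rw [if_congr e1 rfl rfl, if_congr e2 rfl rfl]

lemma sgn_congr {T T' : U → U → Prop} {x y : U}
    (e1 : T' x y ↔ T x y) (e2 : T' y x ↔ T y x) : sgn T' x y = sgn T x y :=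
  sgn_congr_sp (by simp [StrictPref, e1, e2]) (by simp [StrictPref, e1, e2])

lemma sgn_diff_eq {a : U} {T T' : U → U → Prop}
    (hws : weaklyStrengthens T T' a a) (x y : U) : sgn T' x y = sgn T x y := by
  have hsp : ∀ u v, StrictPref T' u v ↔ StrictPref T u v := by
    intro u v
    rcases hws with h | h | h <;> by_cases huv : u = a ∧ v = a
    · simp only [StrictPref, h]
    · simp only [StrictPref, h]
    · obtain ⟨rfl, rfl⟩ := huv
      simp only [StrictPref, h]
      tauto
    · simp only [StrictPref, h]
      tauto
    · obtain ⟨rfl, rfl⟩ := huv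
      simp only [StrictPref, h]
      tauto
    · simp only [StrictPref, h]
      tauto
  exact sgn_congr_sp (hsp x y) (hsp y x)

lemma sgn_diff {a b : U} (hab : a ≠ b) {T T' : U → U → Prop} (hT : Complete T)
    (hws : weaklyStrengthens T T' a b) :
    ∃ c : ℕ, c ≤ 2 ∧ ∀ x y, sgn T' x y - sgn T x y = c * chi a b x y := by
  have hba' : ¬ (b = a) := Ne.symm hab
  rcases hws with h | h | h
  · refine ⟨0, by norm_num, fun x y => ?_⟩
    rw [sgn_congr (h x y) (h y x)]
    simp
  · have hspab' : StrictPref T' a b ↔ ¬ T b a := by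
      simp [StrictPref, h, hab, hba']
    have hspba' : ¬ StrictPref T' b a := by
      simp [StrictPref, h, hab, hba']
    have hoff : ∀ x y, ¬(x = a ∧ y = b) → ¬(x = b ∧ y = a) → sgn T' x y = sgn T x y := by
      intro x y h1 h2
      refine sgn_congr ?_ ?_
      · rw [h]; exact ⟨fun hh => hh.elim id (fun hc => absurd hc h1), Or.inl⟩
      · rw [h]; exact ⟨fun hh => hh.elim id (fun hc => absurd ⟨hc.2, hc.1⟩ h2), Or.inl⟩
    by_cases hba : StrictPref T b a
    · obtain ⟨hba1, hba2⟩ := hba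
      have nspab' : ¬ StrictPref T' a b := by rw [hspab']; exact not_not_intro hba1
      have nspab : ¬ StrictPref T a b := fun hc => hc.2 hba1
      have spba : StrictPref T b a := ⟨hba1, hba2⟩
      refine ⟨1, by norm_num, fun x y => ?_⟩
      by_cases h1 : x = a ∧ y = b
      · rw [h1.1, h1.2]
        simp [sgn, chi, nspab', hspba', nspab, spba, hab, hba']
      by_cases h2 : x = b ∧ y = a
      · rw [h2.1, h2.2]
        simp [sgn, chi, nspab', hspba', nspab, spba, hab, hba']
      · rw [hoff x y h1 h2]; simp [chi, h1, h2]
    · refine ⟨0, by norm_num, fun x y => ?_⟩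
      have e1 : StrictPref T' a b ↔ StrictPref T a b := by
        rw [hspab']
        constructor
        · intro hh; exact ⟨(hT a b).resolve_right (fun hc => hh hc), hh⟩
        · exact fun hh => hh.2
      by_cases h1 : x = a ∧ y = b
      · rw [h1.1, h1.2, sgn_congr_sp e1 (iff_of_false hspba' hba)]
        simp [chi]
      by_cases h2 : x = b ∧ y = a
      · rw [h2.1, h2.2, sgn_congr_sp (iff_of_false hspba' hba) e1]
        simp [chi, hab, hba']
      · rw [hoff x y h1 h2]; simp [chi, h1, h2]
  · have hT'ab : T' a b := by rw [h]; right; exact ⟨rfl, rfl⟩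
    have hT'ba : ¬ T' b a := by
      rw [h]; rintro (⟨_, hc⟩ | ⟨h3, _⟩); exacts [hc ⟨rfl, rfl⟩, hba' h3]
    have spab' : StrictPref T' a b := ⟨hT'ab, hT'ba⟩
    have nspba' : ¬ StrictPref T' b a := fun hc => hT'ba hc.1
    have hoff : ∀ x y, ¬(x = a ∧ y = b) → ¬(x = b ∧ y = a) → sgn T' x y = sgn T x y := by
      intro x y h1 h2
      refine sgn_congr ?_ ?_
      · rw [h]
        exact ⟨fun hh => hh.elim And.left (fun hc => absurd hc h1),
          fun hh => Or.inl ⟨hh, fun hc => h2 hc⟩⟩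
      · rw [h]
        exact ⟨fun hh => hh.elim And.left (fun hc => absurd ⟨hc.2, hc.1⟩ h2),
          fun hh => Or.inl ⟨hh, fun hc => h1 ⟨hc.2, hc.1⟩⟩⟩
    have key : ∀ (c : ℕ), (sgn T' a b - sgn T a b = c * chi a b a b) →
        (sgn T' b a - sgn T b a = c * chi a b b a) → c ≤ 2 →
        ∃ c : ℕ, c ≤ 2 ∧ ∀ x y, sgn T' x y - sgn T x y = c * chi a b x y := by
      intro c hc1 hc2 hc3
      refine ⟨c, hc3, fun x y => ?_⟩
      by_cases h1 : x = a ∧ y = b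
      · rw [h1.1, h1.2]; exact hc1
      by_cases h2 : x = b ∧ y = a
      · rw [h2.1, h2.2]; exact hc2
      · rw [hoff x y h1 h2]; simp [chi, h1, h2]
    by_cases hsab : StrictPref T a b
    · have nsba : ¬ StrictPref T b a := fun hc => hc.2 hsab.1
      refine key 0 ?_ ?_ (by norm_num) <;>
        simp [sgn, chi, spab', nspba', hsab, nsba, hab, hba']
    · by_cases hsba : StrictPref T b a
      · refine key 2 ?_ ?_ (by norm_num) <;>
          simp [sgn, chi, spab', nspba', hsab, hsba, hab, hba']
      · refine key 1 ?_ ?_ (by norm_num) <;>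
          simp [sgn, chi, spab', nspba', hsab, hsba, hab, hba']

/-- The key manipulation step: appending a voter whose true preference is `a ≻ b`
(everything else indifferent). If that voter reports full indifference, the outcome
must not change provided `b` is not chosen under the indifferent report. -/
lemma step_lemma (f : SCF U) (hsp : WeakKellySP f) {n : ℕ} (B : Fin n → U → U → Prop)
    (hB : ∀ j, Complete (B j)) {A : Finset U} (hA : A.Nonempty) {a b : U} (hab : a ≠ b)
    (hb : b ∉ f.choice (n + 1) (Fin.snoc B indRel) A) :
    f.choice (n + 1) (Fin.snoc B (prefRel a b)) A = f.choice (n + 1) (Fin.snoc B indRel) A := by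
  by_contra hne
  refine hsp ⟨n + 1, Fin.snoc B (prefRel a b), Fin.snoc B indRel, A, Fin.last n,
    complete_snoc hB (prefRel_complete hab),
    complete_snoc hB indRel_complete, hA, ?_, ?_, Ne.symm hne, ?_⟩
  · intro j hj
    obtain ⟨k, rfl⟩ := Fin.exists_castSucc_eq.mpr hj
    simp
  · intro x y _
    have : (Fin.snoc B indRel : Fin (n + 1) → U → U → Prop) (Fin.last n) = indRel :=
      Fin.snoc_last _ _
    rw [this]
    exact ⟨trivial, trivial⟩
  · intro x hx y hy
    have : (Fin.snoc B (prefRel a b) : Fin (n + 1) → U → U → Prop) (Fin.last n) = prefRel a b :=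
      Fin.snoc_last _ _
    rw [this]
    rintro ⟨rfl, rfl⟩
    exact hb hx

/-- Every weakly R̂-strategyproof pairwise SCF satisfies set-monotonicity. -/
theorem pairwise_weakSP_setMonotone (f : SCF U)
    (hp : PairwiseSCF f) (hsp : WeakKellySP f) : SetMonotone f := by
  intro n R R' A i a b hR hR' hA ha hbA hbf hupd hws
  have hmu := margin_update R R' i hupd
  by_cases hab : a = b
  · subst hab
    exact hp n n R' R A hR' hR (fun x _ y _ => by
      rw [hmu, sgn_diff_eq hws]; ring)
  · obtain ⟨c, hc2, hcd⟩ := sgn_diff hab (hR i) hws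
    have hm : ∀ x y, margin R' x y = margin R x y + c * chi a b x y := fun x y => by
      rw [hmu, hcd]
    have cB0 : ∀ j, Complete ((Fin.snoc R indRel : Fin (n + 1) → U → U → Prop) j) :=
      complete_snoc hR indRel_complete
    have cB1 : ∀ j, Complete ((Fin.snoc R (prefRel a b) : Fin (n + 1) → U → U → Prop) j) :=
      complete_snoc hR (prefRel_complete hab)
    have c00 := complete_snoc cB0 (indRel_complete (U := U))
    have c01 := complete_snoc cB0 (prefRel_complete hab)
    have c10 := complete_snoc cB1 (indRel_complete (U := U))
    have c11 := complete_snoc cB1 (prefRel_complete hab)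
    have m00 : ∀ x y : U, margin (Fin.snoc (Fin.snoc R indRel) indRel) x y = margin R x y :=
      fun x y => by rw [margin_snoc, margin_snoc, sgn_ind]; ring
    have m01 : ∀ x y : U, margin (Fin.snoc (Fin.snoc R indRel) (prefRel a b)) x y
        = margin R x y + chi a b x y :=
      fun x y => by rw [margin_snoc, margin_snoc, sgn_ind, sgn_pref hab]; ring
    have m10 : ∀ x y : U, margin (Fin.snoc (Fin.snoc R (prefRel a b)) indRel) x y
        = margin R x y + chi a b x y :=
      fun x y => by rw [margin_snoc, margin_snoc, sgn_ind, sgn_pref hab]; ring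
    have m11 : ∀ x y : U, margin (Fin.snoc (Fin.snoc R (prefRel a b)) (prefRel a b)) x y
        = margin R x y + 2 * chi a b x y :=
      fun x y => by rw [margin_snoc, margin_snoc, sgn_pref hab]; ring
    have e0 : f.choice (n + 1 + 1) (Fin.snoc (Fin.snoc R indRel) indRel) A
        = f.choice n R A :=
      hp _ _ _ _ A c00 hR (fun x _ y _ => m00 x y)
    have e1 : f.choice (n + 1 + 1) (Fin.snoc (Fin.snoc R indRel) (prefRel a b)) A
        = f.choice (n + 1 + 1) (Fin.snoc (Fin.snoc R indRel) indRel) A :=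
      step_lemma f hsp _ cB0 hA hab (by rw [e0]; exact hbf)
    have e1' : f.choice (n + 1 + 1) (Fin.snoc (Fin.snoc R (prefRel a b)) indRel) A
        = f.choice (n + 1 + 1) (Fin.snoc (Fin.snoc R indRel) (prefRel a b)) A :=
      hp _ _ _ _ A c10 c01 (fun x _ y _ => by rw [m10 x y, m01 x y])
    have e2 : f.choice (n + 1 + 1) (Fin.snoc (Fin.snoc R (prefRel a b)) (prefRel a b)) A
        = f.choice (n + 1 + 1) (Fin.snoc (Fin.snoc R (prefRel a b)) indRel) A :=
      step_lemma f hsp _ cB1 hA hab (by rw [e1', e1, e0]; exact hbf)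
    interval_cases c
    · have h := hp n (n + 1 + 1) R' (Fin.snoc (Fin.snoc R indRel) indRel) A hR' c00
        (fun x _ y _ => by rw [hm x y, m00 x y]; push_cast; ring)
      rw [h, e0]
    · have h := hp n (n + 1 + 1) R' (Fin.snoc (Fin.snoc R indRel) (prefRel a b)) A hR' c01
        (fun x _ y _ => by rw [hm x y, m01 x y]; push_cast; ring)
      rw [h, e1, e0]
    · have h := hp n (n + 1 + 1) R' (Fin.snoc (Fin.snoc R (prefRel a b)) (prefRel a b)) A hR' c11
        (fun x _ y _ => by rw [hm x y, m11 x y]; push_cast; ring)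
      rw [h, e2, e1', e1, e0]
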